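/- Consider the three-agent system on ℝ³: ẋ₁ = −α₁(x₁) + ρ₁(x₃ − x₁), ẋ₂ = ρ₂(x₁ − x₂) + ρ₃(x₃ − x₂), ẋ₃ = ρ₄(x₂ − x₃), where α₁ : ℝ → ℝ is continuously differentiable, strictly increasing with α₁(0) = 0 and α₁'(σ) ≥ c̲₀ > 0 for all σ; each ρᵢ : ℝ → ℝ is continuously differentiable, strictly increasing with ρᵢ(0) = 0; ρ₁'(σ) ≤ c̄₁ and ρ₃'(σ) ≤ c̄₃ for all σ with c̄₁, c̄₃ > 0; and ρ₂'(σ) ≥ c̲₂ > 0 and ρ₄'(σ) ≥ c̲₄ > 0 for all σ. Let ε₁, ε₂ > 0 satisfy c̲₀ > (ε₁ + ε₂) c̄₁ and ε₁ c̲₂ > ε₂ c̄₃, and set w = (1, 1 + ε₁, 1 + ε₁ + ε₂)ᵀ and c = max{ (ε₁ + ε₂) c̄₁ − c̲₀, ε₂ c̄₃ − ε₁ c̲₂, −ε₂ c̲₄ }. Then c < 0 and the Jacobian J(x) of the system satisfies J(x) w ≤ c 𝟙 componentwise for all x ∈ ℝ³; consequently the origin is globally asymptotically stable and V(x) = max{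 |x₁|, |x₂|, |x₃| } is a global Lyapunov function for the origin. -/

import Mathlib

open Filter Topology

noncomputable section

/-- A solution of `ẋ = f(x)` with values in `X`, defined for all `t ≥ 0`. -/
def IsSolution {n : ℕ} (f : (Fin n → ℝ) → (Fin n → ℝ)) (X : Set (Fin n → ℝ))
    (x : ℝ → (Fin n → ℝ)) : Prop :=
  (∀ t : ℝ, 0 ≤ t → x t ∈ X) ∧ ∀ t : ℝ, 0 ≤ t → HasDerivAt x (f (x t)) t

/-- A global Lyapunov function for the equilibrium `xs` of `ẋ = f(x)` on `X`. -/
def IsGlobalLyapunov {n : ℕ} (f : (Fin n → ℝ) → (Fin n → ℝ)) (X : Set (Fin n → ℝ))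
    (xs : Fin n → ℝ) (V : (Fin n → ℝ) → ℝ) : Prop :=
  ContinuousOn V X ∧
  (∀ x ∈ X, 0 ≤ V x) ∧
  (∀ x ∈ X, (V x = 0 ↔ x = xs)) ∧
  (∀ L : ℝ, IsCompact {x ∈ X | V x ≤ L}) ∧
  ∀ x : ℝ → (Fin n → ℝ), IsSolution f X x →
    AntitoneOn (fun t => V (x t)) (Set.Ici 0) ∧
    Tendsto (fun t => V (x t)) atTop (nhds 0)

/-- Global asymptotic stability of the equilibrium `xs` of `ẋ = f(x)` on `X`. -/
def IsGAS {n : ℕ} (f : (Fin n → ℝ) → (Fin n → ℝ)) (X : Set (Fin n → ℝ))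
    (xs : Fin n → ℝ) : Prop :=
  (∀ ε > (0 : ℝ), ∃ δ > (0 : ℝ), ∀ x : ℝ → (Fin n → ℝ), IsSolution f X x →
      ‖x 0 - xs‖ < δ → ∀ t ≥ (0 : ℝ), ‖x t - xs‖ < ε) ∧
  ∀ x : ℝ → (Fin n → ℝ), IsSolution f X x → Tendsto x atTop (nhds xs)


/-- The three-agent rendezvous vector field. -/
def fAgents (α ρ1 ρ2 ρ3 ρ4 : ℝ → ℝ) : (Fin 3 → ℝ) → (Fin 3 → ℝ) := fun x =>
  ![-(α (x 0)) + ρ1 (x 2 - x 0),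
    ρ2 (x 0 - x 1) + ρ3 (x 2 - x 1),
    ρ4 (x 1 - x 2)]

/-- Its Jacobian, expressed through the derivatives of `α, ρ₁, …, ρ₄`. -/
def JAgents (α' ρ1' ρ2' ρ3' ρ4' : ℝ → ℝ) (x : Fin 3 → ℝ) :
    Matrix (Fin 3) (Fin 3) ℝ :=
  !![-(α' (x 0)) - ρ1' (x 2 - x 0), 0, ρ1' (x 2 - x 0);
     ρ2' (x 0 - x 1), -(ρ2' (x 0 - x 1)) - ρ3' (x 2 - x 1), ρ3' (x 2 - x 1);
     0, ρ4' (x 1 - x 2), -(ρ4' (x 1 - x 2))]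


open Set in
/-- MVT consequence: if `g 0 = 0` and `g' ≤ d` everywhere, then `g s ≤ d * s` for `s ≥ 0`. -/
lemma slope_ub_nonneg {g g' : ℝ → ℝ} (hg : ∀ s, HasDerivAt g (g' s) s) (h0 : g 0 = 0)
    {d : ℝ} (hd : ∀ s, g' s ≤ d) {s : ℝ} (hs : 0 ≤ s) : g s ≤ d * s := by
  rcases eq_or_lt_of_le hs with h | h
  · simp [← h, h0]
  · obtain ⟨ξ, _, hξ⟩ := exists_hasDerivAt_eq_slope g g' h
      (fun t _ => (hg t).continuousAt.continuousWithinAt) (fun t _ => hg t)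
    rw [h0, sub_zero, sub_zero] at hξ
    have hdd := hd ξ
    rw [hξ] at hdd
    rw [div_le_iff₀ h] at hdd
    linarith [hdd]

open Set in
lemma slope_ub_nonpos {g g' : ℝ → ℝ} (hg : ∀ s, HasDerivAt g (g' s) s) (h0 : g 0 = 0)
    {d : ℝ} (hd : ∀ s, g' s ≤ d) {s : ℝ} (hs : s ≤ 0) : d * s ≤ g s := by
  rcases eq_or_lt_of_le hs with h | h
  · simp [h, h0]
  · obtain ⟨ξ, _, hξ⟩ := exists_hasDerivAt_eq_slope g g' h
      (fun t _ => (hg t).continuousAt.continuousWithinAt) (fun t _ => hg t)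
    rw [h0] at hξ
    have hdd := hd ξ
    rw [hξ] at hdd
    have heq : (0 - g s) / (0 - s) = g s / s := by
      rw [zero_sub, zero_sub, neg_div_neg_eq]
    rw [heq, div_le_iff_of_neg h] at hdd
    linarith [hdd]

lemma slope_lb_nonneg {g g' : ℝ → ℝ} (hg : ∀ s, HasDerivAt g (g' s) s) (h0 : g 0 = 0)
    {d : ℝ} (hd : ∀ s, d ≤ g' s) {s : ℝ} (hs : 0 ≤ s) : d * s ≤ g s := by
  have := slope_ub_nonneg (g := fun t => -g t) (g' := fun t => -g' t)
    (fun t => (hg t).neg) (by simp [h0]) (d := -d) (fun t => by simpa using hd t) hs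
  linarith

lemma slope_lb_nonpos {g g' : ℝ → ℝ} (hg : ∀ s, HasDerivAt g (g' s) s) (h0 : g 0 = 0)
    {d : ℝ} (hd : ∀ s, d ≤ g' s) {s : ℝ} (hs : s ≤ 0) : g s ≤ d * s := by
  have := slope_ub_nonpos (g := fun t => -g t) (g' := fun t => -g' t)
    (fun t => (hg t).neg) (by simp [h0]) (d := -d) (fun t => by simpa using hd t) hs
  linarith

/-- If `u` has derivative `du` at `t`, `|u t| ≤ M * v` and, in case of contact
`|u t| = M * v`, the appropriate one-sided derivative of `|u|` is `< r * v`, then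
eventually to the right of `t` we have `|u z| - M * v < r * v * (z - t)`. -/
lemma eventually_abs_slope {u : ℝ → ℝ} {du t v M r : ℝ} (hu : HasDerivAt u du t) (hv : 0 < v)
    (hm : |u t| ≤ M * v)
    (hc : |u t| = M * v →
      (if 0 < u t then du else if u t < 0 then -du else |du|) < r * v) :
    ∀ᶠ z in 𝓝[>] t, |u z| - M * v < r * v * (z - t) := by
  by_cases hE : |u t| = M * v
  · have hd := hc hE
    have key : Tendsto (slope (fun z => |u z|) t) (𝓝[>] t)
        (𝓝 (if 0 < u t then du else if u t < 0 then -du else |du|)) := by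
      rcases lt_trichotomy (u t) 0 with h | h | h
      · have hev : (fun z => |u z|) =ᶠ[𝓝 t] (fun z => -u z) := by
          filter_upwards [hu.continuousAt.eventually_lt_const h] with z hz
          rw [abs_of_neg hz]
        have : HasDerivAt (fun z => |u z|) (-du) t := (hu.neg).congr_of_eventuallyEq hev
        simp only [if_neg (by linarith : ¬ 0 < u t), if_pos h]
        exact (hasDerivAt_iff_tendsto_slope.mp this).mono_left
          (nhdsWithin_mono _ fun z hz => ne_of_gt hz)
      · have hs : Tendsto (slope u t) (𝓝[>] t) (𝓝 du) :=
          (hasDerivAt_iff_tendsto_slope.mp hu).mono_left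
            (nhdsWithin_mono _ fun z hz => ne_of_gt hz)
        have habs : Tendsto (fun z => |slope u t z|) (𝓝[>] t) (𝓝 |du|) := hs.abs
        simp only [if_neg (by linarith : ¬ 0 < u t), if_neg (by linarith : ¬ u t < 0)]
        refine habs.congr' ?_
        filter_upwards [self_mem_nhdsWithin] with z (hz : t < z)
        simp only [slope_def_field, h, sub_zero, abs_zero, abs_div,
          abs_of_pos (show (0:ℝ) < z - t by linarith)]
      · have hev : (fun z => |u z|) =ᶠ[𝓝 t] u := by
          filter_upwards [hu.continuousAt.eventually_const_lt h] with z hz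
          rw [abs_of_pos hz]
        have : HasDerivAt (fun z => |u z|) du t := hu.congr_of_eventuallyEq hev
        simp only [if_pos h]
        exact (hasDerivAt_iff_tendsto_slope.mp this).mono_left
          (nhdsWithin_mono _ fun z hz => ne_of_gt hz)
    have hevlt := key.eventually_lt_const hd
    filter_upwards [hevlt, self_mem_nhdsWithin] with z hz (hz' : t < z)
    rw [slope_def_field, div_lt_iff₀ (by linarith : (0:ℝ) < z - t)] at hz
    calc |u z| - M * v = |u z| - |u t| := by rw [hE]
    _ < r * v * (z - t) := by linarith
  · have hlt : |u t| - M * v < 0 := lt_of_le_of_ne (by linarith) (by intro h; exact hE (by linarith))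
    set a := |u t| - M * v with ha
    have h1 : ∀ᶠ z in 𝓝[>] t, |u z| - M * v < a / 2 := by
      have : Tendsto (fun z => |u z| - M * v) (𝓝[>] t) (𝓝 a) :=
        ((hu.continuousAt.abs.sub continuousAt_const).tendsto).mono_left nhdsWithin_le_nhds
      exact this.eventually_lt_const (by linarith)
    have h2 : ∀ᶠ z in 𝓝[>] t, a / 2 < r * v * (z - t) := by
      have : Tendsto (fun z => r * v * (z - t)) (𝓝[>] t) (𝓝 0) := by
        have h : Continuous (fun z : ℝ => r * v * (z - t)) := by continuity
        have h2 := h.tendsto t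
        simp only [sub_self, mul_zero] at h2
        exact h2.mono_left nhdsWithin_le_nhds
      exact this.eventually_const_lt (by linarith)
    filter_upwards [h1, h2] with z hz1 hz2
    linarith

/-- The weighted max function. -/
def VV (v y : Fin 3 → ℝ) : ℝ := max (|y 0| / v 0) (max (|y 1| / v 1) (|y 2| / v 2))

lemma abs_div_le_VV (v y : Fin 3 → ℝ) (i : Fin 3) : |y i| / v i ≤ VV v y := by
  fin_cases i
  · exact le_max_left _ _
  · exact le_trans (le_max_left _ _) (le_max_right _ _)
  · exact le_trans (le_max_right _ _) (le_max_right _ _)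

lemma VV_nonneg {v : Fin 3 → ℝ} (hv : ∀ i, 0 < v i) (y : Fin 3 → ℝ) : 0 ≤ VV v y :=
  le_trans (div_nonneg (abs_nonneg _) (hv 0).le) (abs_div_le_VV v y 0)

lemma abs_le_VV_mul {v : Fin 3 → ℝ} (hv : ∀ i, 0 < v i) (y : Fin 3 → ℝ) (i : Fin 3) :
    |y i| ≤ VV v y * v i :=
  (div_le_iff₀ (hv i)).mp (abs_div_le_VV v y i)

lemma VV_lt_iff {v y : Fin 3 → ℝ} {r : ℝ} : VV v y < r ↔ ∀ i, |y i| / v i < r := by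
  constructor
  · intro h i
    exact lt_of_le_of_lt (abs_div_le_VV v y i) h
  · intro h
    exact max_lt (h 0) (max_lt (h 1) (h 2))

/-- Signed one-sided derivative of `|x · i|/v i`. -/
def dAux (F : (Fin 3 → ℝ) → Fin 3 → ℝ) (v : Fin 3 → ℝ) (x : ℝ → Fin 3 → ℝ) (t : ℝ)
    (i : Fin 3) : ℝ :=
  (if 0 < x t i then F (x t) i else if x t i < 0 then -(F (x t) i) else |F (x t) i|) / v i

def eAux (F : (Fin 3 → ℝ) → Fin 3 → ℝ) (v : Fin 3 → ℝ) (x : ℝ → Fin 3 → ℝ) (c : ℝ)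
    (t : ℝ) (i : Fin 3) : ℝ :=
  if |x t i| = VV v (x t) * v i then dAux F v x t i else c - 1

def DAux (F : (Fin 3 → ℝ) → Fin 3 → ℝ) (v : Fin 3 → ℝ) (x : ℝ → Fin 3 → ℝ) (c : ℝ)
    (t : ℝ) : ℝ :=
  max (eAux F v x c t 0) (max (eAux F v x c t 1) (eAux F v x c t 2))

lemma eAux_le_DAux (F : (Fin 3 → ℝ) → Fin 3 → ℝ) (v : Fin 3 → ℝ) (x : ℝ → Fin 3 → ℝ)
    (c t : ℝ) (i : Fin 3) : eAux F v x c t i ≤ DAux F v x c t := by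
  unfold DAux
  fin_cases i
  · exact le_max_left _ _
  · exact le_trans (le_max_left _ _) (le_max_right _ _)
  · exact le_trans (le_max_right _ _) (le_max_right _ _)

open Set in
/-- Core decay estimate via the fencing theorem. -/
lemma decay_core (F : (Fin 3 → ℝ) → (Fin 3 → ℝ)) (v : Fin 3 → ℝ) (hv : ∀ i, 0 < v i) (lam : ℝ)
    (hub : ∀ (y : Fin 3 → ℝ) (m : ℝ), 0 < m → (∀ j, |y j| ≤ m * v j) → ∀ i,
      (y i = m * v i → F y i < lam * (m * v i)) ∧ (y i = -(m * v i) → -(F y i) < lam * (m * v i)))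
    (x : ℝ → Fin 3 → ℝ) (hx : ∀ t, 0 ≤ t → HasDerivAt x (F (x t)) t)
    {s t₀ : ℝ} (hs : 0 ≤ s) (hst : s ≤ t₀) {M : ℝ} (hM : 0 < M) (hMs : VV v (x s) ≤ M) :
    VV v (x t₀) ≤ M * Real.exp (lam * (t₀ - s)) := by
  have hxi : ∀ (i : Fin 3) (t : ℝ), 0 ≤ t → HasDerivAt (fun z => x z i) (F (x t) i) t :=
    fun i t ht => (hasDerivAt_pi.mp (hx t ht)) i
  have hBpos : ∀ t : ℝ, 0 < M * Real.exp (lam * (t - s)) :=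
    fun t => mul_pos hM (Real.exp_pos _)
  have hhc : ContinuousOn (fun t => VV v (x t)) (Icc s t₀) := by
    intro t ht
    have hxc : ContinuousWithinAt x (Icc s t₀) t :=
      (hx t (hs.trans ht.1)).continuousAt.continuousWithinAt
    have hcomp : ∀ i : Fin 3, ContinuousWithinAt (fun z => |x z i| / v i) (Icc s t₀) t :=
      fun i => (((continuous_apply i).continuousAt.comp_continuousWithinAt hxc).abs).div_const _
    exact ((hcomp 0).max ((hcomp 1).max (hcomp 2)))
  have key := image_le_of_liminf_slope_right_lt_deriv_boundary'
    (f := fun t => VV v (x t))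
    (f' := fun t => DAux F v x (lam * (M * Real.exp (lam * (t - s)))) t)
    (B := fun t => M * Real.exp (lam * (t - s)))
    (B' := fun t => lam * (M * Real.exp (lam * (t - s)))) (a := s) (b := t₀) hhc
    ?hf' ?ha ?hBc ?hB' ?bound ⟨hst, le_rfl⟩
  · exact key
  case ha => simpa using hMs
  case hBc =>
    have : Continuous fun t : ℝ => M * Real.exp (lam * (t - s)) := by
      exact continuous_const.mul ((continuous_const.mul (continuous_id.sub continuous_const)).rexp)
    exact this.continuousOn
  case hB' =>
    intro t _
    have h1 : HasDerivAt (fun y : ℝ => lam * (y - s)) lam t := by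
      simpa using ((hasDerivAt_id t).sub_const s).const_mul lam
    have h2 : HasDerivAt (fun y : ℝ => M * Real.exp (lam * (y - s)))
        (M * (Real.exp (lam * (t - s)) * lam)) t := h1.exp.const_mul M
    have h3 : M * (Real.exp (lam * (t - s)) * lam) = lam * (M * Real.exp (lam * (t - s))) := by
      ring
    exact (h3 ▸ h2).hasDerivWithinAt
  case bound =>
    intro t ht hco
    have hm : 0 < M * Real.exp (lam * (t - s)) := hBpos t
    have habs : ∀ j, |x t j| ≤ (M * Real.exp (lam * (t - s))) * v j := by
      intro j
      calc |x t j| ≤ VV v (x t) * v j := abs_le_VV_mul hv (x t) j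
      _ = (M * Real.exp (lam * (t - s))) * v j := by rw [hco]
    have hhub := hub (x t) _ hm habs
    have hlt : ∀ i, eAux F v x (lam * (M * Real.exp (lam * (t - s)))) t i
        < lam * (M * Real.exp (lam * (t - s))) := by
      intro i
      by_cases hmax : |x t i| = VV v (x t) * v i
      · rw [eAux, if_pos hmax]
        rw [hco] at hmax
        rcases lt_trichotomy (x t i) 0 with hneg | hzero | hpos
        · have hxe : x t i = -((M * Real.exp (lam * (t - s))) * v i) := by
            rw [abs_of_neg hneg] at hmax; linarith
          have hF := (hhub i).2 hxe
          rw [dAux, if_neg (by linarith), if_pos hneg, div_lt_iff₀ (hv i)]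
          calc -(F (x t) i) < lam * ((M * Real.exp (lam * (t - s))) * v i) := hF
          _ = lam * (M * Real.exp (lam * (t - s))) * v i := by ring
        · exfalso
          rw [hzero, abs_zero] at hmax
          nlinarith [hv i]
        · have hxe : x t i = (M * Real.exp (lam * (t - s))) * v i := by
            rw [abs_of_pos hpos] at hmax; linarith
          have hF := (hhub i).1 hxe
          rw [dAux, if_pos hpos, div_lt_iff₀ (hv i)]
          calc F (x t) i < lam * ((M * Real.exp (lam * (t - s))) * v i) := hF
          _ = lam * (M * Real.exp (lam * (t - s))) * v i := by ring
      · rw [eAux, if_neg hmax]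
        linarith
    exact max_lt (hlt 0) (max_lt (hlt 1) (hlt 2))
  case hf' =>
    intro t ht r hr
    have ht0 : 0 ≤ t := hs.trans ht.1
    have hslope : ∀ i : Fin 3,
        ∀ᶠ z in 𝓝[>] t, |x z i| - VV v (x t) * v i < r * v i * (z - t) := by
      intro i
      refine eventually_abs_slope (hxi i t ht0) (hv i) (abs_le_VV_mul hv (x t) i) ?_
      intro hE
      have he : eAux F v x (lam * (M * Real.exp (lam * (t - s)))) t i = dAux F v x t i :=
        if_pos hE
      have hdr : dAux F v x t i < r :=
        lt_of_le_of_lt (he ▸ eAux_le_DAux F v x _ t i) hr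
      rw [dAux, div_lt_iff₀ (hv i)] at hdr
      exact hdr
    apply Filter.Eventually.frequently
    filter_upwards [hslope 0, hslope 1, hslope 2, self_mem_nhdsWithin] with z h0 h1 h2 hz
    have hz' : t < z := hz
    rw [slope_def_field, div_lt_iff₀ (by linarith : (0:ℝ) < z - t)]
    have hmax : VV v (x z) < VV v (x t) + r * (z - t) := by
      apply VV_lt_iff.mpr
      intro i
      rw [div_lt_iff₀ (hv i)]
      fin_cases i <;>
        simp only [Fin.zero_eta, Fin.mk_one, Fin.reduceFinMk, Fin.isValue] <;>
        nlinarith [h0, h1, h2]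
    linarith

/-- Non-strict version of the decay estimate. -/
lemma decay (F : (Fin 3 → ℝ) → (Fin 3 → ℝ)) (v : Fin 3 → ℝ) (hv : ∀ i, 0 < v i) (lam : ℝ)
    (hub : ∀ (y : Fin 3 → ℝ) (m : ℝ), 0 < m → (∀ j, |y j| ≤ m * v j) → ∀ i,
      (y i = m * v i → F y i ≤ lam * (m * v i)) ∧ (y i = -(m * v i) → -(F y i) ≤ lam * (m * v i)))
    (x : ℝ → Fin 3 → ℝ) (hx : ∀ t, 0 ≤ t → HasDerivAt x (F (x t)) t)
    {s t : ℝ} (hs : 0 ≤ s) (hst : s ≤ t) :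
    VV v (x t) ≤ VV v (x s) * Real.exp (lam * (t - s)) := by
  have main : ∀ ε > (0:ℝ), VV v (x t) ≤ (VV v (x s) + ε) * Real.exp ((lam + ε) * (t - s)) := by
    intro ε hε
    refine decay_core F v hv (lam + ε) ?_ x hx hs hst
      (M := VV v (x s) + ε) (by linarith [VV_nonneg hv (x s)]) (by linarith)
    intro y m hm hy i
    obtain ⟨hP, hN⟩ := hub y m hm hy i
    have hpos : 0 < ε * (m * v i) := mul_pos hε (mul_pos hm (hv i))
    exact ⟨fun h => by nlinarith [hP h], fun h => by nlinarith [hN h]⟩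
  have cont : Tendsto (fun ε : ℝ => (VV v (x s) + ε) * Real.exp ((lam + ε) * (t - s))) (𝓝[>] 0)
      (𝓝 ((VV v (x s) + 0) * Real.exp ((lam + 0) * (t - s)))) := by
    refine Tendsto.mono_left ?_ nhdsWithin_le_nhds
    have hcont : Continuous fun ε : ℝ => (VV v (x s) + ε) * Real.exp ((lam + ε) * (t - s)) :=
      (continuous_const.add continuous_id).mul
        (((continuous_const.add continuous_id).mul continuous_const).rexp)
    exact hcont.tendsto 0
  simp only [add_zero] at cont
  exact ge_of_tendsto cont (eventually_nhdsWithin_of_forall fun ε hε => main ε hε)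

set_option maxHeartbeats 1000000 in
/-- Example (multiagent system): with suitable slopes and `ε₁, ε₂`, the
weighted row sums of the Jacobian are uniformly negative, the origin is
globally asymptotically stable, and `max{|x₁|,|x₂|,|x₃|}` is a global
Lyapunov function. -/
theorem multiagent_example
    (α ρ1 ρ2 ρ3 ρ4 α' ρ1' ρ2' ρ3' ρ4' : ℝ → ℝ)
    -- continuous differentiability
    (hα : ∀ s, HasDerivAt α (α' s) s) (hαc : Continuous α')
    (hρ1 : ∀ s, HasDerivAt ρ1 (ρ1' s) s) (hρ1c : Continuous ρ1')
    (hρ2 : ∀ s, HasDerivAt ρ2 (ρ2' s) s) (hρ2c : Continuous ρ2')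
    (hρ3 : ∀ s, HasDerivAt ρ3 (ρ3' s) s) (hρ3c : Continuous ρ3')
    (hρ4 : ∀ s, HasDerivAt ρ4 (ρ4' s) s) (hρ4c : Continuous ρ4')
    -- strict monotonicity and zeros at the origin
    (hαm : StrictMono α) (hα0 : α 0 = 0)
    (hρ1m : StrictMono ρ1) (hρ10 : ρ1 0 = 0)
    (hρ2m : StrictMono ρ2) (hρ20 : ρ2 0 = 0)
    (hρ3m : StrictMono ρ3) (hρ30 : ρ3 0 = 0)
    (hρ4m : StrictMono ρ4) (hρ40 : ρ4 0 = 0)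
    -- slope bounds
    (c0 cb1 c2 cb3 c4 : ℝ)
    (hc0 : 0 < c0) (hcb1 : 0 < cb1) (hc2 : 0 < c2) (hcb3 : 0 < cb3) (hc4 : 0 < c4)
    (hαlb : ∀ s, c0 ≤ α' s)
    (hρ1ub : ∀ s, ρ1' s ≤ cb1)
    (hρ2lb : ∀ s, c2 ≤ ρ2' s)
    (hρ3ub : ∀ s, ρ3' s ≤ cb3)
    (hρ4lb : ∀ s, c4 ≤ ρ4' s)
    -- choice of `ε₁, ε₂`
    (ε1 ε2 : ℝ) (hε1 : 0 < ε1) (hε2 : 0 < ε2)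
    (hchoice1 : (ε1 + ε2) * cb1 < c0) (hchoice2 : ε2 * cb3 < ε1 * c2)
    -- the weight vector and the contraction rate
    (w : Fin 3 → ℝ) (hwdef : w = ![1, 1 + ε1, 1 + ε1 + ε2])
    (c : ℝ)
    (hcdef : c = max ((ε1 + ε2) * cb1 - c0) (max (ε2 * cb3 - ε1 * c2) (-(ε2 * c4)))) :
    c < 0 ∧
    (∀ x : Fin 3 → ℝ, ∀ i, (JAgents α' ρ1' ρ2' ρ3' ρ4' x).mulVec w i ≤ c) ∧
    IsGAS (fAgents α ρ1 ρ2 ρ3 ρ4) Set.univ 0 ∧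
    IsGlobalLyapunov (fAgents α ρ1 ρ2 ρ3 ρ4) Set.univ 0
      (fun x => max |x 0| (max |x 1| |x 2|)) := by
  -- basic facts about `c`, `w`, `lam`
  have hW : (0:ℝ) < 1 + ε1 + ε2 := by linarith
  have hc1 : (ε1 + ε2) * cb1 - c0 ≤ c := hcdef ▸ le_max_left _ _
  have hc2 : ε2 * cb3 - ε1 * c2 ≤ c := hcdef ▸ le_trans (le_max_left _ _) (le_max_right _ _)
  have hc3 : -(ε2 * c4) ≤ c := hcdef ▸ le_trans (le_max_right _ _) (le_max_right _ _)
  have hcneg : c < 0 := by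
    rw [hcdef]
    exact max_lt (by linarith) (max_lt (by linarith) (by nlinarith [mul_pos hε2 hc4]))
  have hw0 : w 0 = 1 := by rw [hwdef]; rfl
  have hw1 : w 1 = 1 + ε1 := by rw [hwdef]; rfl
  have hw2 : w 2 = 1 + ε1 + ε2 := by rw [hwdef]; rfl
  have hv : ∀ i : Fin 3, 0 < w i := by
    intro i; fin_cases i <;> simp only [Fin.zero_eta, Fin.mk_one, Fin.reduceFinMk, Fin.isValue] <;>
      [rw [hw0]; rw [hw1]; rw [hw2]] <;> linarith
  have hw_le : ∀ i : Fin 3, w i ≤ 1 + ε1 + ε2 := by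
    intro i; fin_cases i <;> simp only [Fin.zero_eta, Fin.mk_one, Fin.reduceFinMk, Fin.isValue] <;>
      [rw [hw0]; rw [hw1]; rw [hw2]] <;> linarith
  have h1w : ∀ i : Fin 3, 1 ≤ w i := by
    intro i; fin_cases i <;> simp only [Fin.zero_eta, Fin.mk_one, Fin.reduceFinMk, Fin.isValue] <;>
      [rw [hw0]; rw [hw1]; rw [hw2]] <;> linarith
  set lam := c / (1 + ε1 + ε2) with hlamdef
  have hlamneg : lam < 0 := div_neg_of_neg_of_pos hcneg hW
  have hkey : ∀ m wi : ℝ, 0 < m → 0 < wi → wi ≤ 1 + ε1 + ε2 → c * m ≤ lam * (m * wi) := by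
    intro m wi hm hwi hwile
    rw [hlamdef, div_mul_eq_mul_div, le_div_iff₀ hW]
    nlinarith [mul_nonneg (mul_nonneg (neg_nonneg.mpr hcneg.le) hm.le) (sub_nonneg.mpr hwile)]
  -- scalar slope estimates
  have hαpos : ∀ {s : ℝ}, 0 ≤ s → c0 * s ≤ α s := fun hs => slope_lb_nonneg hα hα0 hαlb hs
  have hαneg : ∀ {s : ℝ}, s ≤ 0 → α s ≤ c0 * s := fun hs => slope_lb_nonpos hα hα0 hαlb hs
  have hρ1pos : ∀ {s : ℝ}, 0 ≤ s → ρ1 s ≤ cb1 * s := fun hs => slope_ub_nonneg hρ1 hρ10 hρ1ub hs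
  have hρ1neg : ∀ {s : ℝ}, s ≤ 0 → cb1 * s ≤ ρ1 s := fun hs => slope_ub_nonpos hρ1 hρ10 hρ1ub hs
  have hρ2pos : ∀ {s : ℝ}, 0 ≤ s → c2 * s ≤ ρ2 s := fun hs => slope_lb_nonneg hρ2 hρ20 hρ2lb hs
  have hρ2neg : ∀ {s : ℝ}, s ≤ 0 → ρ2 s ≤ c2 * s := fun hs => slope_lb_nonpos hρ2 hρ20 hρ2lb hs
  have hρ3pos : ∀ {s : ℝ}, 0 ≤ s → ρ3 s ≤ cb3 * s := fun hs => slope_ub_nonneg hρ3 hρ30 hρ3ub hs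
  have hρ3neg : ∀ {s : ℝ}, s ≤ 0 → cb3 * s ≤ ρ3 s := fun hs => slope_ub_nonpos hρ3 hρ30 hρ3ub hs
  have hρ4pos : ∀ {s : ℝ}, 0 ≤ s → c4 * s ≤ ρ4 s := fun hs => slope_lb_nonneg hρ4 hρ40 hρ4lb hs
  have hρ4neg : ∀ {s : ℝ}, s ≤ 0 → ρ4 s ≤ c4 * s := fun hs => slope_lb_nonpos hρ4 hρ40 hρ4lb hs
  -- component formulas
  have e0 : ∀ y : Fin 3 → ℝ, fAgents α ρ1 ρ2 ρ3 ρ4 y 0 = -(α (y 0)) + ρ1 (y 2 - y 0) :=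
    fun _ => rfl
  have e1 : ∀ y : Fin 3 → ℝ, fAgents α ρ1 ρ2 ρ3 ρ4 y 1 = ρ2 (y 0 - y 1) + ρ3 (y 2 - y 1) :=
    fun _ => rfl
  have e2 : ∀ y : Fin 3 → ℝ, fAgents α ρ1 ρ2 ρ3 ρ4 y 2 = ρ4 (y 1 - y 2) :=
    fun _ => rfl
  -- the weighted hub condition
  have hub_w : ∀ (y : Fin 3 → ℝ) (m : ℝ), 0 < m → (∀ j, |y j| ≤ m * w j) → ∀ i,
      (y i = m * w i → fAgents α ρ1 ρ2 ρ3 ρ4 y i ≤ lam * (m * w i)) ∧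
      (y i = -(m * w i) → -(fAgents α ρ1 ρ2 ρ3 ρ4 y i) ≤ lam * (m * w i)) := by
    intro y m hm hy i
    obtain ⟨b0l, b0r⟩ := abs_le.mp (hw0 ▸ hy 0)
    obtain ⟨b1l, b1r⟩ := abs_le.mp (hw1 ▸ hy 1)
    obtain ⟨b2l, b2r⟩ := abs_le.mp (hw2 ▸ hy 2)
    fin_cases i <;> simp only [Fin.zero_eta, Fin.mk_one, Fin.reduceFinMk, Fin.isValue]
    · rw [hw0, e0]
      constructor
      · intro hyi
        have hA : c0 * (m * 1) ≤ α (y 0) := by rw [hyi]; exact hαpos (mul_nonneg hm.le zero_le_one)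
        have hB : ρ1 (y 2 - y 0) ≤ cb1 * (m * (ε1 + ε2)) :=
          le_trans (hρ1m.monotone (show y 2 - y 0 ≤ m * (ε1 + ε2) by linarith))
            (hρ1pos (mul_nonneg hm.le (by linarith)))
        have hC : c * m ≤ lam * (m * 1) := hkey m 1 hm one_pos (by linarith)
        have hD : ((ε1 + ε2) * cb1 - c0) * m ≤ c * m := mul_le_mul_of_nonneg_right hc1 hm.le
        linarith [hA, hB, hC, hD]
      · intro hyi
        have hA : α (y 0) ≤ c0 * (-(m * 1)) := by rw [hyi]; exact hαneg (neg_nonpos.mpr (mul_nonneg hm.le zero_le_one))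
        have hB : cb1 * (-(m * (ε1 + ε2))) ≤ ρ1 (y 2 - y 0) :=
          le_trans (hρ1neg (neg_nonpos.mpr (mul_nonneg hm.le (by linarith))))
            (hρ1m.monotone (show -(m * (ε1 + ε2)) ≤ y 2 - y 0 by linarith))
        have hC : c * m ≤ lam * (m * 1) := hkey m 1 hm one_pos (by linarith)
        have hD : ((ε1 + ε2) * cb1 - c0) * m ≤ c * m := mul_le_mul_of_nonneg_right hc1 hm.le
        linarith [hA, hB, hC, hD]
    · rw [hw1, e1]
      constructor
      · intro hyi
        have hA : ρ2 (y 0 - y 1) ≤ c2 * (-(m * ε1)) :=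
          le_trans (hρ2m.monotone (show y 0 - y 1 ≤ -(m * ε1) by linarith))
            (hρ2neg (neg_nonpos.mpr (mul_nonneg hm.le hε1.le)))
        have hB : ρ3 (y 2 - y 1) ≤ cb3 * (m * ε2) :=
          le_trans (hρ3m.monotone (show y 2 - y 1 ≤ m * ε2 by linarith))
            (hρ3pos (mul_nonneg hm.le hε2.le))
        have hC : c * m ≤ lam * (m * (1 + ε1)) := hkey m (1 + ε1) hm (by linarith) (by linarith)
        have hD : (ε2 * cb3 - ε1 * c2) * m ≤ c * m := mul_le_mul_of_nonneg_right hc2 hm.le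
        linarith [hA, hB, hC, hD]
      · intro hyi
        have hA : c2 * (m * ε1) ≤ ρ2 (y 0 - y 1) :=
          le_trans (hρ2pos (mul_nonneg hm.le hε1.le))
            (hρ2m.monotone (show m * ε1 ≤ y 0 - y 1 by linarith))
        have hB : cb3 * (-(m * ε2)) ≤ ρ3 (y 2 - y 1) :=
          le_trans (hρ3neg (neg_nonpos.mpr (mul_nonneg hm.le hε2.le)))
            (hρ3m.monotone (show -(m * ε2) ≤ y 2 - y 1 by linarith))
        have hC : c * m ≤ lam * (m * (1 + ε1)) := hkey m (1 + ε1) hm (by linarith) (by linarith)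
        have hD : (ε2 * cb3 - ε1 * c2) * m ≤ c * m := mul_le_mul_of_nonneg_right hc2 hm.le
        linarith [hA, hB, hC, hD]
    · rw [hw2, e2]
      constructor
      · intro hyi
        have hA : ρ4 (y 1 - y 2) ≤ c4 * (-(m * ε2)) :=
          le_trans (hρ4m.monotone (show y 1 - y 2 ≤ -(m * ε2) by linarith))
            (hρ4neg (neg_nonpos.mpr (mul_nonneg hm.le hε2.le)))
        have hC : c * m ≤ lam * (m * (1 + ε1 + ε2)) :=
          hkey m (1 + ε1 + ε2) hm (by linarith) (by linarith)
        have hD : (-(ε2 * c4)) * m ≤ c * m := mul_le_mul_of_nonneg_right hc3 hm.le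
        linarith [hA, hC, hD]
      · intro hyi
        have hA : c4 * (m * ε2) ≤ ρ4 (y 1 - y 2) :=
          le_trans (hρ4pos (mul_nonneg hm.le hε2.le))
            (hρ4m.monotone (show m * ε2 ≤ y 1 - y 2 by linarith))
        have hC : c * m ≤ lam * (m * (1 + ε1 + ε2)) :=
          hkey m (1 + ε1 + ε2) hm (by linarith) (by linarith)
        have hD : (-(ε2 * c4)) * m ≤ c * m := mul_le_mul_of_nonneg_right hc3 hm.le
        linarith [hA, hC, hD]
  -- the unweighted hub condition (rate 0)
  have hub_1 : ∀ (y : Fin 3 → ℝ) (m : ℝ), 0 < m →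
      (∀ j, |y j| ≤ m * (fun _ : Fin 3 => (1:ℝ)) j) → ∀ i,
      (y i = m * (fun _ : Fin 3 => (1:ℝ)) i →
        fAgents α ρ1 ρ2 ρ3 ρ4 y i ≤ 0 * (m * (fun _ : Fin 3 => (1:ℝ)) i)) ∧
      (y i = -(m * (fun _ : Fin 3 => (1:ℝ)) i) →
        -(fAgents α ρ1 ρ2 ρ3 ρ4 y i) ≤ 0 * (m * (fun _ : Fin 3 => (1:ℝ)) i)) := by
    intro y m hm hy i
    simp only [mul_one, zero_mul]
    have hy' : ∀ j : Fin 3, |y j| ≤ m := fun j => by simpa using hy j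
    obtain ⟨b0l, b0r⟩ := abs_le.mp (hy' 0)
    obtain ⟨b1l, b1r⟩ := abs_le.mp (hy' 1)
    obtain ⟨b2l, b2r⟩ := abs_le.mp (hy' 2)
    have hαm0 : ∀ {s : ℝ}, 0 ≤ s → 0 ≤ α s := fun {s} hs => by
      rcases eq_or_lt_of_le hs with h | h
      · simp [← h, hα0]
      · have := hαm h; rw [hα0] at this; linarith
    have hαm0' : ∀ {s : ℝ}, s ≤ 0 → α s ≤ 0 := fun {s} hs => by
      rcases eq_or_lt_of_le hs with h | h
      · simp [h, hα0]
      · have := hαm h; rw [hα0] at this; linarith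
    have mono1 : ∀ {s : ℝ}, s ≤ 0 → ρ1 s ≤ 0 := fun {s} hs => hρ10 ▸ hρ1m.monotone hs
    have mono1' : ∀ {s : ℝ}, 0 ≤ s → 0 ≤ ρ1 s := fun {s} hs => hρ10 ▸ hρ1m.monotone hs
    have mono2 : ∀ {s : ℝ}, s ≤ 0 → ρ2 s ≤ 0 := fun {s} hs => hρ20 ▸ hρ2m.monotone hs
    have mono2' : ∀ {s : ℝ}, 0 ≤ s → 0 ≤ ρ2 s := fun {s} hs => hρ20 ▸ hρ2m.monotone hs
    have mono3 : ∀ {s : ℝ}, s ≤ 0 → ρ3 s ≤ 0 := fun {s} hs => hρ30 ▸ hρ3m.monotone hs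
    have mono3' : ∀ {s : ℝ}, 0 ≤ s → 0 ≤ ρ3 s := fun {s} hs => hρ30 ▸ hρ3m.monotone hs
    have mono4 : ∀ {s : ℝ}, s ≤ 0 → ρ4 s ≤ 0 := fun {s} hs => hρ40 ▸ hρ4m.monotone hs
    have mono4' : ∀ {s : ℝ}, 0 ≤ s → 0 ≤ ρ4 s := fun {s} hs => hρ40 ▸ hρ4m.monotone hs
    fin_cases i <;> simp only [Fin.zero_eta, Fin.mk_one, Fin.reduceFinMk, Fin.isValue]
    · rw [e0]
      constructor
      · intro hyi
        have h1 : 0 ≤ α (y 0) := hαm0 (by linarith)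
        have h2 : ρ1 (y 2 - y 0) ≤ 0 := mono1 (by linarith)
        linarith
      · intro hyi
        have h1 : α (y 0) ≤ 0 := hαm0' (by linarith)
        have h2 : 0 ≤ ρ1 (y 2 - y 0) := mono1' (by linarith)
        linarith
    · rw [e1]
      constructor
      · intro hyi
        have h1 : ρ2 (y 0 - y 1) ≤ 0 := mono2 (by linarith)
        have h2 : ρ3 (y 2 - y 1) ≤ 0 := mono3 (by linarith)
        linarith
      · intro hyi
        have h1 : 0 ≤ ρ2 (y 0 - y 1) := mono2' (by linarith)
        have h2 : 0 ≤ ρ3 (y 2 - y 1) := mono3' (by linarith)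
        linarith
    · rw [e2]
      constructor
      · intro hyi
        exact mono4 (by linarith)
      · intro hyi
        have := mono4' (show (0:ℝ) ≤ y 1 - y 2 by linarith)
        linarith
  -- decay of the weighted max along solutions
  have hdecay : ∀ x : ℝ → Fin 3 → ℝ, IsSolution (fAgents α ρ1 ρ2 ρ3 ρ4) Set.univ x →
      ∀ s t : ℝ, 0 ≤ s → s ≤ t → VV w (x t) ≤ VV w (x s) * Real.exp (lam * (t - s)) :=
    fun x hx s t hs hst => decay _ w hv lam hub_w x hx.2 hs hst
  -- norm comparison with the weighted max
  have hVVle : ∀ y : Fin 3 → ℝ, VV w y ≤ ‖y‖ := by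
    intro y
    have comp : ∀ i : Fin 3, |y i| / w i ≤ ‖y‖ := fun i =>
      le_trans (div_le_self (abs_nonneg _) (h1w i))
        (by rw [← Real.norm_eq_abs]; exact norm_le_pi_norm y i)
    exact max_le (comp 0) (max_le (comp 1) (comp 2))
  have hnormle : ∀ y : Fin 3 → ℝ, ‖y‖ ≤ (1 + ε1 + ε2) * VV w y := by
    intro y
    have hnn : 0 ≤ (1 + ε1 + ε2) * VV w y := mul_nonneg hW.le (VV_nonneg hv y)
    rw [pi_norm_le_iff_of_nonneg hnn]
    intro i
    rw [Real.norm_eq_abs]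
    calc |y i| ≤ VV w y * w i := abs_le_VV_mul hv y i
    _ ≤ VV w y * (1 + ε1 + ε2) := mul_le_mul_of_nonneg_left (hw_le i) (VV_nonneg hv y)
    _ = (1 + ε1 + ε2) * VV w y := mul_comm _ _
  have hexp_le_one : ∀ t : ℝ, 0 ≤ t → Real.exp (lam * t) ≤ 1 := fun t ht =>
    Real.exp_le_one_iff.mpr (by nlinarith)
  have hbound : ∀ x : ℝ → Fin 3 → ℝ, IsSolution (fAgents α ρ1 ρ2 ρ3 ρ4) Set.univ x →
      ∀ t : ℝ, 0 ≤ t →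
      ‖x t‖ ≤ ((1 + ε1 + ε2) * VV w (x 0)) * Real.exp (lam * t) := by
    intro x hx t ht
    calc ‖x t‖ ≤ (1 + ε1 + ε2) * VV w (x t) := hnormle _
    _ ≤ (1 + ε1 + ε2) * (VV w (x 0) * Real.exp (lam * (t - 0))) :=
        mul_le_mul_of_nonneg_left (hdecay x hx 0 t le_rfl ht) hW.le
    _ = ((1 + ε1 + ε2) * VV w (x 0)) * Real.exp (lam * t) := by rw [sub_zero]; ring
  have htendexp : Tendsto (fun t : ℝ => Real.exp (lam * t)) atTop (𝓝 0) := by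
    have h1 : Tendsto (fun t : ℝ => (-lam) * t) atTop atTop :=
      Tendsto.const_mul_atTop (by linarith) tendsto_id
    have h2 := Real.tendsto_exp_neg_atTop_nhds_zero.comp h1
    refine h2.congr fun t => ?_
    simp [Function.comp, neg_mul]
  have hnormtend : ∀ x : ℝ → Fin 3 → ℝ, IsSolution (fAgents α ρ1 ρ2 ρ3 ρ4) Set.univ x →
      Tendsto (fun t => ‖x t‖) atTop (𝓝 0) := by
    intro x hx
    apply squeeze_zero' (Filter.Eventually.of_forall fun t => norm_nonneg _)
    · filter_upwards [eventually_ge_atTop (0:ℝ)] with t ht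
      exact hbound x hx t ht
    · have := htendexp.const_mul ((1 + ε1 + ε2) * VV w (x 0))
      simpa using this
  have hVcont : Continuous fun y : Fin 3 → ℝ => max |y 0| (max |y 1| |y 2|) :=
    ((continuous_apply (0 : Fin 3)).abs).max
      (((continuous_apply (1 : Fin 3)).abs).max ((continuous_apply (2 : Fin 3)).abs))
  have hVle_norm : ∀ y : Fin 3 → ℝ, max |y 0| (max |y 1| |y 2|) ≤ ‖y‖ := by
    intro y
    have comp : ∀ i : Fin 3, |y i| ≤ ‖y‖ := fun i => by
      rw [← Real.norm_eq_abs]; exact norm_le_pi_norm y i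
    exact max_le (comp 0) (max_le (comp 1) (comp 2))
  refine ⟨hcneg, ?_, ⟨?_, ?_⟩, ?_, ?_, ?_, ?_, ?_⟩
  · -- Jacobian bound
    intro x i
    fin_cases i <;>
      simp [JAgents, Matrix.mulVec, dotProduct, Fin.sum_univ_three, hwdef]
    · nlinarith [hαlb (x 0),
        mul_le_mul_of_nonneg_right (hρ1ub (x 2 - x 0)) (show (0:ℝ) ≤ ε1 + ε2 by linarith), hc1]
    · nlinarith [mul_le_mul_of_nonneg_left (hρ2lb (x 0 - x 1)) hε1.le,
        mul_le_mul_of_nonneg_left (hρ3ub (x 2 - x 1)) hε2.le, hc2]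
    · nlinarith [mul_le_mul_of_nonneg_left (hρ4lb (x 1 - x 2)) hε2.le, hc3]
  · -- stability
    intro ε hε
    refine ⟨ε / (1 + ε1 + ε2), div_pos hε hW, ?_⟩
    intro x hx hx0 t ht
    rw [sub_zero] at hx0 ⊢
    calc ‖x t‖ ≤ (1 + ε1 + ε2) * VV w (x t) := hnormle _
    _ ≤ (1 + ε1 + ε2) * (VV w (x 0) * Real.exp (lam * (t - 0))) :=
        mul_le_mul_of_nonneg_left (hdecay x hx 0 t le_rfl ht) hW.le
    _ ≤ (1 + ε1 + ε2) * VV w (x 0) := by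
        have h3 := hexp_le_one (t - 0) (by linarith)
        exact mul_le_mul_of_nonneg_left
          (mul_le_of_le_one_right (VV_nonneg hv (x 0)) h3) hW.le
    _ ≤ (1 + ε1 + ε2) * ‖x 0‖ := mul_le_mul_of_nonneg_left (hVVle _) hW.le
    _ < (1 + ε1 + ε2) * (ε / (1 + ε1 + ε2)) := by
        exact mul_lt_mul_of_pos_left hx0 hW
    _ = ε := by field_simp
  · -- attractivity
    intro x hx
    exact tendsto_zero_iff_norm_tendsto_zero.mpr (hnormtend x hx)
  · -- V continuous
    exact hVcont.continuousOn
  · -- V nonnegative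
    intro y _
    exact le_trans (abs_nonneg _) (le_max_left _ _)
  · -- V zero iff origin
    intro y _
    constructor
    · intro h
      have k0 : |y 0| ≤ 0 := h ▸ le_max_left _ _
      have k1 : |y 1| ≤ 0 := h ▸ le_trans (le_max_left _ _) (le_max_right _ _)
      have k2 : |y 2| ≤ 0 := h ▸ le_trans (le_max_right _ _) (le_max_right _ _)
      have z0 : y 0 = 0 := abs_nonpos_iff.mp k0
      have z1 : y 1 = 0 := abs_nonpos_iff.mp k1
      have z2 : y 2 = 0 := abs_nonpos_iff.mp k2
      funext i
      fin_cases i <;> simp only [Fin.zero_eta, Fin.mk_one, Fin.reduceFinMk, Fin.isValue,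
        Pi.zero_apply] <;> assumption
    · rintro rfl
      simp
  · -- compact sublevel sets
    intro L
    apply IsCompact.of_isClosed_subset (isCompact_closedBall (0 : Fin 3 → ℝ) |L|)
    · have hset : {y : Fin 3 → ℝ | y ∈ Set.univ ∧ max |y 0| (max |y 1| |y 2|) ≤ L} =
          (fun y : Fin 3 → ℝ => max |y 0| (max |y 1| |y 2|)) ⁻¹' (Set.Iic L) := by
        ext y; simp
      rw [show {x_1 ∈ Set.univ | (fun x => max |x 0| (max |x 1| |x 2|)) x_1 ≤ L} =
          (fun y : Fin 3 → ℝ => max |y 0| (max |y 1| |y 2|)) ⁻¹' (Set.Iic L) from hset]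
      exact IsClosed.preimage hVcont isClosed_Iic
    · intro y hy
      obtain ⟨-, hyL⟩ := hy
      rw [Metric.mem_closedBall, dist_zero_right]
      rw [pi_norm_le_iff_of_nonneg (abs_nonneg L)]
      intro i
      rw [Real.norm_eq_abs]
      have hcomp : |y i| ≤ max |y 0| (max |y 1| |y 2|) := by
        fin_cases i
        · exact le_max_left _ _
        · exact le_trans (le_max_left _ _) (le_max_right _ _)
        · exact le_trans (le_max_right _ _) (le_max_right _ _)
      exact le_trans hcomp (le_trans hyL (le_abs_self L))
  · -- Lyapunov decrease and convergence along solutions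
    intro x hx
    constructor
    · intro s hs t ht hst
      have h1v : ∀ i : Fin 3, 0 < (fun _ : Fin 3 => (1:ℝ)) i := fun _ => one_pos
      have hdec := decay _ (fun _ : Fin 3 => (1:ℝ)) h1v 0 hub_1 x hx.2 hs hst
      simp only [VV, div_one, zero_mul, Real.exp_zero, mul_one] at hdec
      exact hdec
    · apply squeeze_zero'
        (Filter.Eventually.of_forall fun t => le_trans (abs_nonneg _) (le_max_left _ _))
      · filter_upwards [eventually_ge_atTop (0:ℝ)] with t ht
        exact le_trans (hVle_norm (x t)) (hbound x hx t ht)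
      · have := htendexp.const_mul ((1 + ε1 + ε2) * VV w (x 0))
        simpa using this

end
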